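/- Let H = {a,b,c,d,e} with the hyperoperation ∘ of Table 1. Then (d ∘ d) * {b} ≠ (b ∘ d) * {d}; consequently there exist x, y, z ∈ H with (x ∘ y) * {z} ≠ (z ∘ y) * {x}, so H with ∘ is not an LA-hypergroupoid (Example 4 of the commented paper is wrong). -/
import Mathlib

/-- The five-element set `H = {a,b,c,d,e}` of Table 1. -/
inductive H1 : Type
  | a | b | c | d | e
  deriving DecidableEq

open H1

/-- The hyperoperation of Table 1. -/
def circ1 : H1 → H1 → Set H1
  | a, _ => {a}
  | b, a => {a}
  | b, b => {a, e}
  | b, c => {a, e}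
  | b, d => {a, c}
  | b, e => {a, e}
  | c, a => {a}
  | c, b => {a, e}
  | c, c => {a, e}
  | c, d => {a, b}
  | c, e => {a, e}
  | d, a => {a}
  | d, b => {b}
  | d, c => {c}
  | d, d => {d}
  | d, e => {e}
  | e, a => {a}
  | e, b => {a, e}
  | e, c => {a, e}
  | e, d => {a, e}
  | e, e => {a, e}

/-- The operation on nonempty subsets induced by the hyperoperation. -/
def inducedStar {H : Type*} (circ : H → H → Set H) (A B : Set H) : Set H :=
  ⋃ x ∈ A, ⋃ y ∈ B, circ x y

/-- An LA-hypergroupoid: `(x ∘ y) * {z} = (z ∘ y) * {x}` for all `x y z`. -/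
def IsLAHypergroupoid {H : Type*} (circ : H → H → Set H) : Prop :=
  ∀ x y z : H, inducedStar circ (circ x y) {z} = inducedStar circ (circ z y) {x}

lemma key : inducedStar circ1 (circ1 d d) {b} ≠ inducedStar circ1 (circ1 b d) {d} := by
  intro h
  have ha : a ∈ inducedStar circ1 (circ1 b d) {d} := by
    simp [inducedStar, circ1]
  rw [← h] at ha
  simp [inducedStar, circ1] at ha

/-- In Table 1, `(d ∘ d) * {b} ≠ (b ∘ d) * {d}`; hence there exist `x y z` with
`(x ∘ y) * {z} ≠ (z ∘ y) * {x}`, so `H` with `∘` is not an LA-hypergroupoid. -/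
theorem table1_not_LA :
    inducedStar circ1 (circ1 d d) {b} ≠ inducedStar circ1 (circ1 b d) {d} ∧
    (∃ x y z : H1,
      inducedStar circ1 (circ1 x y) {z} ≠ inducedStar circ1 (circ1 z y) {x}) ∧
    ¬ IsLAHypergroupoid circ1 := by
  refine ⟨key, ⟨d, d, b, key⟩, fun h => key (h d d b)⟩
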